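/- Let G be an abelian group, λ an integer such that the map x ↦ λx is injective on G, B a finite nonempty subset of G, and K > 0 a real number such that |B + λ·B| ≤ K|B|. Then for every positive integer l, |B + λ·B + λ²·B + ⋯ + λ^l·B| ≤ K^{7l−6}|B|. -/

import Mathlib

open Pointwise Finset

set_option maxHeartbeats 1000000

private lemma image_hom_sum_aux {G : Type*} [AddCommGroup G] [DecidableEq G] (f : G →+ G)
    (s : Finset ℕ) (F : ℕ → Finset G) :
    (∑ i ∈ s, F i).image f = ∑ i ∈ s, (F i).image f := by
  classical
  induction s using Finset.induction_on with
  | empty =>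
      ext x
      simp [Finset.mem_zero]
  | insert _ _ hx ih =>
      rw [Finset.sum_insert hx, Finset.sum_insert hx, Finset.image_add, ih]

/-- Let `G` be an abelian group, `λ` an integer such that `x ↦ λx` is injective on `G`,
`B` a finite nonempty subset of `G`, and `K > 0` with `|B + λ·B| ≤ K|B|` (where
`λ·B = {λb : b ∈ B}` and `+` is the Minkowski sum). Then for every positive integer `l`,
`|B + λ·B + λ²·B + ⋯ + λ^l·B| ≤ K^{7l−6}|B|`. -/
theorem card_iterated_dilate_sum_le {G : Type*} [AddCommGroup G] [DecidableEq G]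
    (lam : ℤ) (hlam : Function.Injective fun x : G => lam • x)
    (B : Finset G) (hB : B.Nonempty) (K : ℝ) (hK : 0 < K)
    (h : ((B + B.image fun b => lam • b).card : ℝ) ≤ K * B.card) :
    ∀ l : ℕ, 1 ≤ l →
      (((∑ i ∈ Finset.range (l + 1), B.image fun b => lam ^ i • b).card : ℝ)) ≤
        K ^ (7 * l - 6) * B.card := by
  classical
  -- the dilation homomorphism
  set d : G →+ G := zsmulAddGroupHom lam with hd
  have hdfun : ⇑d = fun x : G => lam • x := rfl
  have hdinj : Function.Injective d := by rw [hdfun]; exact hlam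
  have hcard_im : ∀ X : Finset G, (X.image d).card = X.card := fun X =>
    Finset.card_image_of_injective X hdinj
  -- notation for the partial sums
  set D : ℕ → Finset G := fun i => B.image fun b => lam ^ i • b with hD
  set S : ℕ → Finset G := fun l => ∑ i ∈ Finset.range (l + 1), D i with hS
  have hD0 : D 0 = B := by
    simp [hD]
  have hDsucc : ∀ i : ℕ, (D i).image d = D (i + 1) := by
    intro i
    show ((B.image fun b => lam ^ i • b).image d) = B.image fun b => lam ^ (i + 1) • b
    rw [Finset.image_image]
    congr 1
    funext b
    show lam • lam ^ i • b = lam ^ (i + 1) • b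
    rw [pow_succ, mul_comm, mul_zsmul]
  have hSim : ∀ l : ℕ, (S l).image d = ∑ i ∈ Finset.range (l + 1), D (i + 1) := by
    intro l
    show ((∑ i ∈ Finset.range (l + 1), D i).image d) = _
    rw [image_hom_sum_aux]
    exact Finset.sum_congr rfl fun i _ => hDsucc i
  -- decomposition S (l+1) = (S l).image d + B
  have hdec : ∀ l : ℕ, S (l + 1) = (S l).image d + B := by
    intro l
    have h1 := Finset.sum_range_succ' D (l + 1)
    rw [hD0] at h1
    rw [hSim]
    exact h1
  -- basic positivity facts
  have hBpos : (0 : ℝ) < B.card := by exact_mod_cast hB.card_pos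
  have hD1 : D 1 = B.image fun b => lam • b := by simp [hD]
  have hD1card : (D 1).card = B.card := by
    rw [← hDsucc 0, hD0, hcard_im]
  have hK1 : (1 : ℝ) ≤ K := by
    have h1 : B.card ≤ (B + B.image fun b => lam • b).card :=
      Finset.card_le_card_add_right (hB.image _)
    have h2 : (B.card : ℝ) ≤ K * B.card := le_trans (by exact_mod_cast h1) h
    nlinarith
  -- Plünnecke–Ruzsa: |3B| ≤ K³|B|
  have hP : ((3 • B).card : ℝ) ≤ K ^ 3 * B.card := by
    have hA : (B.image d).Nonempty := hB.image _
    have key := Finset.pluennecke_ruzsa_inequality_nsmul_add hA B 3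
    have keyR := NNRat.cast_le (K := ℝ).2 key
    push_cast at keyR
    rw [hcard_im] at keyR
    have hAB : ((B.image d + B).card : ℝ) ≤ K * B.card := by
      rw [add_comm]
      simpa [hdfun] using h
    have hdivle : ((B.image d + B).card : ℝ) / B.card ≤ K := by
      rw [div_le_iff₀ hBpos]; exact hAB
    have hnn : (0 : ℝ) ≤ ((B.image d + B).card : ℝ) / B.card := by positivity
    have hpow : (((B.image d + B).card : ℝ) / B.card) ^ 3 ≤ K ^ 3 :=
      pow_le_pow_left₀ hnn hdivle 3
    refine keyR.trans ?_
    exact mul_le_mul_of_nonneg_right hpow (le_of_lt hBpos)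
  -- triple sum as 3 • B
  have h3 : B + B + B = 3 • B := by
    rw [show (3 : ℕ) = 2 + 1 from rfl, succ_nsmul, two_nsmul]
  -- step inequality: |S (l+1)| ≤ K⁴ |S l|
  have hstep : ∀ l : ℕ, ((S (l + 1)).card : ℝ) ≤ K ^ 4 * (S l).card := by
    intro l
    -- first: |S (l+1)| * |B| ≤ K |B| * |B + S l|
    have e1 : ((S (l + 1)).card : ℝ) * B.card ≤ K * B.card * (B + S l).card := by
      have tri := Finset.ruzsa_triangle_inequality_add_add_add B (D 1) ((S l).image d)
      -- #(B + (S l).image d) * #(D 1) ≤ #(B + D 1) * #(D 1 + (S l).image d)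
      have hSd : S (l + 1) = B + (S l).image d := by rw [hdec, add_comm]
      have hdsum : D 1 + (S l).image d = (B + S l).image d := by
        rw [Finset.image_add, ← hDsucc 0, hD0]
      rw [hdsum, hcard_im, hD1card] at tri
      rw [hSd]
      have tri' : ((B + (S l).image d).card : ℝ) * B.card ≤
          ((B + D 1).card : ℝ) * (B + S l).card := by exact_mod_cast tri
      refine tri'.trans ?_
      have hBD1 : ((B + D 1).card : ℝ) ≤ K * B.card := by rw [hD1]; exact h
      have hnn2 : (0 : ℝ) ≤ ((B + S l).card : ℝ) := by positivity
      nlinarith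
    -- second: |B + S l| * |B| ≤ K³ |B| * |S l|
    have e2 : ((B + S l).card : ℝ) * B.card ≤ K ^ 3 * B.card * (S l).card := by
      set T : Finset G := ∑ i ∈ Finset.range l, D (i + 1) with hT
      have hSl : S l = T + B := by
        have h1 := Finset.sum_range_succ' D l
        rw [hD0] at h1
        exact h1
      have hBS : B + S l = B + B + T := by
        rw [hSl]; abel
      have tri := Finset.ruzsa_triangle_inequality_add_add_add (B + B) B T
      -- #((B + B) + T) * #B ≤ #((B + B) + B) * #(B + T)
      have hBT : B + T = S l := by rw [hSl, add_comm]
      rw [h3, hBT] at tri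
      have tri' : ((B + B + T).card : ℝ) * B.card ≤ ((3 • B).card : ℝ) * (S l).card := by
        exact_mod_cast tri
      rw [hBS]
      refine tri'.trans ?_
      have hnn3 : (0 : ℝ) ≤ ((S l).card : ℝ) := by positivity
      nlinarith
    -- combine
    have hBSle : ((B + S l).card : ℝ) ≤ K ^ 3 * (S l).card :=
      le_of_mul_le_mul_right (by linarith [e2]) hBpos
    have hfin : ((S (l + 1)).card : ℝ) * B.card ≤ K ^ 4 * (S l).card * B.card := by
      calc ((S (l + 1)).card : ℝ) * B.card ≤ K * B.card * (B + S l).card := e1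
        _ ≤ K * B.card * (K ^ 3 * (S l).card) := by
            have hKB : (0 : ℝ) ≤ K * B.card := by positivity
            exact mul_le_mul_of_nonneg_left hBSle hKB
        _ = K ^ 4 * (S l).card * B.card := by ring
    exact le_of_mul_le_mul_right hfin hBpos
  -- induction
  intro l hl
  induction l, hl using Nat.le_induction with
  | base =>
      have hS1 : S 1 = B + D 1 := by
        show (∑ i ∈ Finset.range 2, D i) = B + D 1
        rw [Finset.sum_range_succ, Finset.sum_range_one, hD0]
      show ((S 1).card : ℝ) ≤ K ^ (7 * 1 - 6) * B.card
      rw [hS1, hD1]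
      simpa using h
  | succ l hl ih =>
      show ((S (l + 1)).card : ℝ) ≤ K ^ (7 * (l + 1) - 6) * B.card
      have ih' : ((S l).card : ℝ) ≤ K ^ (7 * l - 6) * B.card := ih
      calc ((S (l + 1)).card : ℝ) ≤ K ^ 4 * (S l).card := hstep l
        _ ≤ K ^ 4 * (K ^ (7 * l - 6) * B.card) := by
            have hK4 : (0 : ℝ) ≤ K ^ 4 := by positivity
            exact mul_le_mul_of_nonneg_left ih' hK4
        _ = K ^ (4 + (7 * l - 6)) * B.card := by rw [pow_add]; ring
        _ ≤ K ^ (7 * (l + 1) - 6) * B.card := by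
            have hexp : 4 + (7 * l - 6) ≤ 7 * (l + 1) - 6 := by omega
            have hmono := pow_le_pow_right₀ hK1 hexp
            nlinarith
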